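/- Let n ≥ 1, let A and B be n×n real symmetric positive definite matrices, and let t ∈ (0,1). Then for every z ∈ ℝⁿ, ⟨z, ((1−t)·A⁻¹ + t·B⁻¹)⁻¹ z⟩ = inf { ⟨x, Ax⟩/(1−t) + ⟨y, By⟩/t : x, y ∈ ℝⁿ, x + y = z }, and the infimum is attained exactly at x = (1−t)·(t·A + (1−t)·B)⁻¹ B z (with y = z − x). -/

import Mathlib

open scoped Matrix
open Matrix

section aux

variable {n : ℕ}

lemma posDef_smul' {c : ℝ} (hc : 0 < c) {A : Matrix (Fin n) (Fin n) ℝ} (hA : A.PosDef) :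
    (c • A).PosDef := by
  refine ⟨?_, fun x hx => ?_⟩
  · unfold Matrix.IsHermitian
    rw [conjTranspose_smul, hA.1]
    norm_num
  · exact (hA.smul hc).2 hx

lemma dot_trans' (P : Matrix (Fin n) (Fin n) ℝ) (u v : Fin n → ℝ) :
    (P *ᵥ u) ⬝ᵥ v = u ⬝ᵥ (Pᵀ *ᵥ v) := by
  rw [dotProduct_comm, dotProduct_mulVec, ← mulVec_transpose, dotProduct_comm]

end aux

/-- Variational characterization of the matrix harmonic mean (Lemma 1.7):
`⟨z, ((1-t)A⁻¹ + tB⁻¹)⁻¹ z⟩ = inf { ⟨x,Ax⟩/(1-t) + ⟨y,By⟩/t : x + y = z }`,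
with the infimum attained exactly at `x = (1-t)·(tA + (1-t)B)⁻¹ B z`. -/
theorem stmt1 (n : ℕ) (hn : 1 ≤ n) (A B : Matrix (Fin n) (Fin n) ℝ)
    (hA : A.PosDef) (hB : B.PosDef) (t : ℝ) (ht : t ∈ Set.Ioo (0 : ℝ) 1)
    (z : Fin n → ℝ) :
    IsLeast {v : ℝ | ∃ x y : Fin n → ℝ, x + y = z ∧
        v = x ⬝ᵥ A.mulVec x / (1 - t) + y ⬝ᵥ B.mulVec y / t}
      (z ⬝ᵥ (((1 - t) • A⁻¹ + t • B⁻¹)⁻¹).mulVec z) ∧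
    ∀ x y : Fin n → ℝ, x + y = z →
      x ⬝ᵥ A.mulVec x / (1 - t) + y ⬝ᵥ B.mulVec y / t =
        z ⬝ᵥ (((1 - t) • A⁻¹ + t • B⁻¹)⁻¹).mulVec z →
      x = (1 - t) • ((t • A + (1 - t) • B)⁻¹).mulVec (B.mulVec z) := by
  obtain ⟨ht0, ht1⟩ := ht
  have hs : (0:ℝ) < 1 - t := by linarith
  set M : Matrix (Fin n) (Fin n) ℝ := t • A + (1 - t) • B with hMdef
  have hM : M.PosDef := (posDef_smul' ht0 hA).add (posDef_smul' hs hB)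
  have hMdet : IsUnit M.det := isUnit_iff_isUnit_det _ |>.1 hM.isUnit
  have hAdet : IsUnit A.det := isUnit_iff_isUnit_det _ |>.1 hA.isUnit
  have hBdet : IsUnit B.det := isUnit_iff_isUnit_det _ |>.1 hB.isUnit
  have hMM : M⁻¹ * M = 1 := nonsing_inv_mul M hMdet
  have hMM' : M * M⁻¹ = 1 := mul_nonsing_inv M hMdet
  have hAt : Aᵀ = A := (by simpa using hA.1 : A.IsSymm).eq
  have hBt : Bᵀ = B := (by simpa using hB.1 : B.IsSymm).eq
  have hMB : (1 - t) • B = M - t • A := by rw [hMdef]; abel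
  -- key commutation identity
  have key1 : A * M⁻¹ * B = B * M⁻¹ * A := by
    have e1 : (1 - t) • (A * M⁻¹ * B) = A - t • (A * M⁻¹ * A) := by
      calc (1 - t) • (A * M⁻¹ * B) = A * M⁻¹ * ((1 - t) • B) := by
            rw [Matrix.mul_smul]
        _ = A * M⁻¹ * (M - t • A) := by rw [hMB]
        _ = A * (M⁻¹ * M) - t • (A * M⁻¹ * A) := by
            rw [Matrix.mul_sub, Matrix.mul_smul, mul_assoc]
        _ = A - t • (A * M⁻¹ * A) := by rw [hMM, mul_one]
    have e2 : (1 - t) • (B * M⁻¹ * A) = A - t • (A * M⁻¹ * A) := by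
      calc (1 - t) • (B * M⁻¹ * A) = ((1 - t) • B) * M⁻¹ * A := by
            rw [Matrix.smul_mul, Matrix.smul_mul]
        _ = (M - t • A) * M⁻¹ * A := by rw [hMB]
        _ = (M * M⁻¹) * A - t • (A * M⁻¹ * A) := by
            rw [Matrix.sub_mul, Matrix.sub_mul, Matrix.smul_mul, Matrix.smul_mul]
        _ = A - t • (A * M⁻¹ * A) := by rw [hMM', one_mul]
    exact smul_right_injective _ (by positivity : (1:ℝ) - t ≠ 0) (e1.trans e2.symm)
  set C : Matrix (Fin n) (Fin n) ℝ := B * M⁻¹ * A with hCdef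
  -- the harmonic mean equals C
  have key2 : ((1 - t) • A⁻¹ + t • B⁻¹)⁻¹ = C := by
    have hX : (1 - t) • A⁻¹ + t • B⁻¹ = A⁻¹ * M * B⁻¹ := by
      rw [hMdef, Matrix.mul_add, Matrix.add_mul, Matrix.mul_smul, Matrix.smul_mul,
        Matrix.mul_smul, Matrix.smul_mul, nonsing_inv_mul A hAdet, one_mul,
        mul_assoc, mul_nonsing_inv B hBdet, mul_one, add_comm]
    rw [hX, Matrix.mul_inv_rev, Matrix.mul_inv_rev, nonsing_inv_nonsing_inv A hAdet,
      nonsing_inv_nonsing_inv B hBdet, hCdef, mul_assoc]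
  -- the minimizers
  set x₀ : Fin n → ℝ := (1 - t) • ((M⁻¹ * B) *ᵥ z) with hx₀def
  set y₀ : Fin n → ℝ := t • ((M⁻¹ * A) *ᵥ z) with hy₀def
  have hx0y0 : x₀ + y₀ = z := by
    rw [hx₀def, hy₀def, ← smul_mulVec, ← smul_mulVec, ← add_mulVec,
      ← Matrix.mul_smul, ← Matrix.mul_smul, ← Matrix.mul_add]
    rw [show (1 - t) • B + t • A = M by rw [hMdef]; abel, hMM, one_mulVec]
  have hAx₀ : A *ᵥ x₀ = (1 - t) • (C *ᵥ z) := by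
    rw [hx₀def, mulVec_smul, mulVec_mulVec, ← mul_assoc, key1, hCdef]
  have hBy₀ : B *ᵥ y₀ = t • (C *ᵥ z) := by
    rw [hy₀def, mulVec_smul, mulVec_mulVec, ← mul_assoc, hCdef]
  have hf₀ : x₀ ⬝ᵥ A *ᵥ x₀ / (1 - t) + y₀ ⬝ᵥ B *ᵥ y₀ / t = z ⬝ᵥ C *ᵥ z := by
    rw [hAx₀, hBy₀, dotProduct_smul, dotProduct_smul, smul_eq_mul, smul_eq_mul,
      mul_div_cancel_left₀ _ (by positivity : (1:ℝ) - t ≠ 0),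
      mul_div_cancel_left₀ _ (ne_of_gt ht0), ← add_dotProduct, hx0y0]
  -- symmetry of quadratic forms
  have symA : ∀ u v : Fin n → ℝ, u ⬝ᵥ A *ᵥ v = v ⬝ᵥ A *ᵥ u := by
    intro u v
    have h := dot_trans' A u v
    rw [hAt] at h
    rw [← h, dotProduct_comm]
  have symB : ∀ u v : Fin n → ℝ, u ⬝ᵥ B *ᵥ v = v ⬝ᵥ B *ᵥ u := by
    intro u v
    have h := dot_trans' B u v
    rw [hBt] at h
    rw [← h, dotProduct_comm]
  -- main expansion
  have expand : ∀ x y : Fin n → ℝ, x + y = z →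
      x ⬝ᵥ A *ᵥ x / (1 - t) + y ⬝ᵥ B *ᵥ y / t
        = z ⬝ᵥ C *ᵥ z +
          ((x - x₀) ⬝ᵥ A *ᵥ (x - x₀) / (1 - t) + (x - x₀) ⬝ᵥ B *ᵥ (x - x₀) / t) := by
    intro x y hxy
    set w : Fin n → ℝ := x - x₀ with hwdef
    have hx : x = x₀ + w := by rw [hwdef]; abel
    have hy : y = y₀ - w := by
      have : y = z - x := by rw [← hxy]; abel
      rw [this, ← hx0y0, hx]; abel
    rw [← hf₀, hx, hy]
    simp only [mulVec_add, mulVec_sub, dotProduct_add, dotProduct_sub, add_dotProduct,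
      sub_dotProduct]
    rw [symA x₀ w, symB y₀ w, hAx₀, hBy₀, dotProduct_smul, dotProduct_smul,
      smul_eq_mul, smul_eq_mul]
    field_simp
    simp only [dotProduct_smul, smul_eq_mul]
    ring
  -- nonnegativity of the quadratic remainder
  have qnonneg : ∀ w : Fin n → ℝ,
      0 ≤ w ⬝ᵥ A *ᵥ w / (1 - t) + w ⬝ᵥ B *ᵥ w / t := by
    intro w
    have ha : 0 ≤ w ⬝ᵥ A *ᵥ w := by simpa using hA.posSemidef.dotProduct_mulVec_nonneg w
    have hb : 0 ≤ w ⬝ᵥ B *ᵥ w := by simpa using hB.posSemidef.dotProduct_mulVec_nonneg w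
    positivity
  have qpos : ∀ w : Fin n → ℝ, w ≠ 0 →
      0 < w ⬝ᵥ A *ᵥ w / (1 - t) + w ⬝ᵥ B *ᵥ w / t := by
    intro w hw
    have ha : 0 < w ⬝ᵥ A *ᵥ w := by simpa using hA.dotProduct_mulVec_pos hw
    have hb : 0 < w ⬝ᵥ B *ᵥ w := by simpa using hB.dotProduct_mulVec_pos hw
    positivity
  have hx₀eq : x₀ = (1 - t) • ((t • A + (1 - t) • B)⁻¹).mulVec (B.mulVec z) := by
    rw [hx₀def, ← mulVec_mulVec, ← hMdef]
  constructor
  · constructor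
    · exact ⟨x₀, y₀, hx0y0, by rw [key2, ← hf₀]⟩
    · rintro v ⟨x, y, hxy, rfl⟩
      rw [key2]
      have := expand x y hxy
      have hq := qnonneg (x - x₀)
      linarith [this ▸ le_refl (x ⬝ᵥ A.mulVec x / (1 - t) + y ⬝ᵥ B.mulVec y / t)]
  · intro x y hxy heq
    rw [key2] at heq
    have hexp := expand x y hxy
    rw [heq] at hexp
    have hq0 : (x - x₀) ⬝ᵥ A *ᵥ (x - x₀) / (1 - t) + (x - x₀) ⬝ᵥ B *ᵥ (x - x₀) / t = 0 := by
      linarith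
    have hw0 : x - x₀ = 0 := by
      by_contra hw
      exact absurd hq0 (ne_of_gt (qpos _ hw))
    have : x = x₀ := by
      have := sub_eq_zero.mp hw0; exact this
    rw [this, hx₀eq]
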